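/- Let g_1,...,g_K, g_0 ∈ ℝ^m and λ ≥ 0. Consider the strongly concave problem max_{d∈ℝ^m} [ min_{i∈[K]} ⟨g_i, d⟩ − (1/2)‖d‖² + λ⟨g_0, d⟩ ]. Then its (unique) maximizer is d* = g_{w*_λ} + λ g_0, where w*_λ is any minimizer over W of (1/2)‖g_w + λ g_0‖² with g_w = Σ_{i=1}^K w_i g_i; in particular, the optimal value of the max problem equals (1/2) min_{w∈W} ‖g_w + λ g_0‖², and the vector g_{w*_λ} does not depend on the choice of minimizer w*_λ. -/

import Mathlib

open MeasureTheory ProbabilityTheory BigOperators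
open scoped RealInnerProductSpace ENNReal NNReal

noncomputable section

/-- `ℝ^m` with the Euclidean inner product and norm. -/
abbrev Euc (m : ℕ) := EuclideanSpace ℝ (Fin m)

/-- The probability simplex `W ⊆ ℝ^K`. -/
def simplex (K : ℕ) : Set (Euc K) := {w | (∀ i, 0 ≤ w i) ∧ ∑ i, w i = 1}

/-- `g_w = ∑ i, w i • g i`, i.e. the matrix-vector product `G w`, where `G` is the
`m × K` matrix with columns `g i`. -/
def comb {m K : ℕ} (g : Fin K → Euc m) (w : Euc K) : Euc m := ∑ i, w i • g i

/-- Squared Frobenius norm of the `m × K` matrix with columns `g i`. -/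
def frobSq {m K : ℕ} (g : Fin K → Euc m) : ℝ := ∑ i, ‖g i‖ ^ 2

/-- Frobenius norm of the `m × K` matrix with columns `g i`. -/
def frob {m K : ℕ} (g : Fin K → Euc m) : ℝ := Real.sqrt (frobSq g)

/-- `Gᵀ v ∈ ℝ^K`, where `G` is the matrix with columns `g i`. -/
def tvec {m K : ℕ} (g : Fin K → Euc m) (v : Euc m) : Euc K :=
  (EuclideanSpace.equiv (Fin K) ℝ).symm fun i => ⟪g i, v⟫

/-- `p` is the Euclidean projection of `z` onto the set `C`. -/
def projOn {n : ℕ} (C : Set (Euc n)) (z p : Euc n) : Prop :=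
  p ∈ C ∧ ∀ u ∈ C, ‖z - p‖ ≤ ‖z - u‖

lemma comb_add {m K : ℕ} (g : Fin K → Euc m) (a b : Euc K) :
    comb g (a + b) = comb g a + comb g b := by
  simp [comb, add_smul, Finset.sum_add_distrib]

lemma comb_smul {m K : ℕ} (g : Fin K → Euc m) (t : ℝ) (a : Euc K) :
    comb g (t • a) = t • comb g a := by
  simp [comb, smul_smul, Finset.smul_sum]

lemma comb_sub {m K : ℕ} (g : Fin K → Euc m) (a b : Euc K) :
    comb g (a - b) = comb g a - comb g b := by
  simp [comb, sub_smul, Finset.sum_sub_distrib]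

lemma inner_comb {m K : ℕ} (g : Fin K → Euc m) (w : Euc K) (d : Euc m) :
    ⟪comb g w, d⟫ = ∑ i, w i * ⟪g i, d⟫ := by
  simp [comb, sum_inner, real_inner_smul_left, Finset.mul_sum, mul_assoc]

lemma comb_single {m K : ℕ} (g : Fin K → Euc m) (i : Fin K) :
    comb g (EuclideanSpace.single i (1:ℝ)) = g i := by
  simp [comb, EuclideanSpace.single_apply, Finset.sum_ite_eq]

lemma first_order {m K : ℕ} (g : Fin K → Euc m) (g0 : Euc m) (lam : ℝ)
    (w1 : Euc K) (hw1mem : w1 ∈ simplex K)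
    (hw1min : ∀ u ∈ simplex K,
      (1/2) * ‖comb g w1 + lam • g0‖ ^ 2 ≤ (1/2) * ‖comb g u + lam • g0‖ ^ 2)
    (u : Euc K) (hu : u ∈ simplex K) :
    0 ≤ ⟪comb g w1 + lam • g0, (comb g u + lam • g0) - (comb g w1 + lam • g0)⟫ := by
  set v : Euc m := comb g w1 + lam • g0 with hv
  set a : Euc m := comb g u + lam • g0 with ha
  set c : ℝ := ⟪v, a - v⟫ with hc
  set s : ℝ := ‖a - v‖ ^ 2 with hs
  have hkey : ∀ t : ℝ, 0 ≤ t → t ≤ 1 → 0 ≤ 2 * t * c + t ^ 2 * s := by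
    intro t ht0 ht1
    have hmem : w1 + t • (u - w1) ∈ simplex K := by
      constructor
      · intro i
        have h1 := hw1mem.1 i
        have h2 := hu.1 i
        have : (w1 + t • (u - w1)) i = (1 - t) * w1 i + t * u i := by
          simp [PiLp.add_apply, PiLp.smul_apply, PiLp.sub_apply, smul_eq_mul]
          ring
        rw [this]
        have := mul_nonneg (by linarith : (0:ℝ) ≤ 1 - t) h1
        have := mul_nonneg ht0 h2
        linarith
      · have : ∀ i, (w1 + t • (u - w1)) i = w1 i + t * (u i - w1 i) := by
          intro i; simp [PiLp.add_apply, PiLp.smul_apply, PiLp.sub_apply, smul_eq_mul]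
        simp only [this, Finset.sum_add_distrib, ← Finset.mul_sum, Finset.sum_sub_distrib,
          hw1mem.2, hu.2]
        ring
    have hcb : comb g (w1 + t • (u - w1)) + lam • g0 = v + t • (a - v) := by
      rw [comb_add, comb_smul, comb_sub, hv, ha]
      abel_nf
    have h := hw1min _ hmem
    rw [hcb] at h
    have hexp : ‖v + t • (a - v)‖ ^ 2 = ‖v‖ ^ 2 + 2 * t * c + t ^ 2 * s := by
      rw [norm_add_sq_real, real_inner_smul_right, norm_smul]
      rw [hc, hs]
      simp [mul_pow]
      ring
    rw [hexp] at h
    linarith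
  by_contra hneg
  push_neg at hneg
  have hsnn : 0 ≤ s := by positivity
  have hden : 0 < s - c := by linarith
  set t : ℝ := -c / (s - c) with htdef
  have ht0 : 0 ≤ t := div_nonneg (by linarith) hden.le
  have ht1 : t ≤ 1 := by
    rw [htdef, div_le_one hden]; linarith
  have h := hkey t ht0 ht1
  have : 2 * t * c + t ^ 2 * s = t * (c * (s - 2 * c)) / (s - c) := by
    rw [htdef]; field_simp; ring
  rw [this] at h
  have htpos : 0 < t := div_pos (by linarith) hden
  have hlt : t * (c * (s - 2 * c)) / (s - c) < 0 :=
    div_neg_of_neg_of_pos (mul_neg_of_pos_of_neg htpos (mul_neg_of_neg_of_pos hneg (by linarith))) hden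
  linarith

/-- The direction-oriented MOO problem
`max_d [ min_i ⟪g i, d⟫ - ‖d‖²/2 + λ⟪g₀, d⟫ ]` has the unique maximizer
`d* = g_{w*_λ} + λ g₀`, where `w*_λ` is any minimizer over the simplex of
`(1/2)‖g_w + λ g₀‖²`; its optimal value is `(1/2) min_{w ∈ W} ‖g_w + λ g₀‖²`,
and `g_{w*_λ}` does not depend on the choice of minimizer. -/
theorem stmt0 {m K : ℕ} (hK : 2 ≤ K) (hm : 1 ≤ m)
    (g : Fin K → Euc m) (g0 : Euc m) (lam : ℝ) (hlam : 0 ≤ lam)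
    (w1 : Euc K) (hw1mem : w1 ∈ simplex K)
    (hw1min : ∀ u ∈ simplex K,
      (1/2) * ‖comb g w1 + lam • g0‖ ^ 2 ≤ (1/2) * ‖comb g u + lam • g0‖ ^ 2) :
    -- `d* = g_{w*_λ} + λ g₀` is a maximizer
    (∀ d : Euc m,
        (⨅ i : Fin K, ⟪g i, d⟫) - (1/2) * ‖d‖ ^ 2 + lam * ⟪g0, d⟫
          ≤ (⨅ i : Fin K, ⟪g i, comb g w1 + lam • g0⟫)
            - (1/2) * ‖comb g w1 + lam • g0‖ ^ 2
            + lam * ⟪g0, comb g w1 + lam • g0⟫) ∧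
    -- and it is the unique maximizer
    (∀ d : Euc m,
        (∀ d' : Euc m,
            (⨅ i : Fin K, ⟪g i, d'⟫) - (1/2) * ‖d'‖ ^ 2 + lam * ⟪g0, d'⟫
              ≤ (⨅ i : Fin K, ⟪g i, d⟫) - (1/2) * ‖d‖ ^ 2 + lam * ⟪g0, d⟫) →
          d = comb g w1 + lam • g0) ∧
    -- the optimal value of the max problem is `(1/2)‖g_{w*_λ} + λ g₀‖²`
    ((⨅ i : Fin K, ⟪g i, comb g w1 + lam • g0⟫)
        - (1/2) * ‖comb g w1 + lam • g0‖ ^ 2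
        + lam * ⟪g0, comb g w1 + lam • g0⟫
      = (1/2) * ‖comb g w1 + lam • g0‖ ^ 2) ∧
    -- which equals `(1/2) min_{w ∈ W} ‖g_w + λ g₀‖²`
    ((1/2) * ‖comb g w1 + lam • g0‖ ^ 2
      = sInf ((fun u => (1/2) * ‖comb g u + lam • g0‖ ^ 2) '' simplex K)) ∧
    -- and `g_{w*}` is the same for every minimizer `w*`
    (∀ w2 ∈ simplex K,
        (∀ u ∈ simplex K,
            (1/2) * ‖comb g w2 + lam • g0‖ ^ 2 ≤ (1/2) * ‖comb g u + lam • g0‖ ^ 2) →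
        comb g w2 = comb g w1) := by
  have hKpos : 0 < K := by omega
  haveI : Nonempty (Fin K) := ⟨⟨0, hKpos⟩⟩
  set v : Euc m := comb g w1 + lam • g0 with hv
  -- vertices
  have hsingle : ∀ i : Fin K, EuclideanSpace.single i (1:ℝ) ∈ simplex K := by
    intro i
    constructor
    · intro j
      by_cases h : j = i <;> simp [EuclideanSpace.single_apply, h]
    · simp [EuclideanSpace.single_apply]
  -- ⟪g i, v⟫ ≥ A for all i, where A = ‖v‖² - lam⟪g0,v⟫
  have hlow : ∀ i : Fin K, ‖v‖ ^ 2 - lam * ⟪g0, v⟫ ≤ ⟪g i, v⟫ := by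
    intro i
    have h := first_order g g0 lam w1 hw1mem hw1min _ (hsingle i)
    rw [comb_single] at h
    have hexp : ⟪v, (g i + lam • g0) - v⟫
        = ⟪g i, v⟫ + lam * ⟪g0, v⟫ - ‖v‖ ^ 2 := by
      rw [inner_sub_right, inner_add_right, real_inner_smul_right,
        real_inner_self_eq_norm_sq, real_inner_comm v (g i), real_inner_comm v g0]
    rw [hexp] at h
    linarith
  -- A = ⟪comb g w1, v⟫ = ∑ w1 i ⟪g i, v⟫
  have hA : ‖v‖ ^ 2 - lam * ⟪g0, v⟫ = ∑ i, w1 i * ⟪g i, v⟫ := by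
    rw [← inner_comb]
    have : ‖v‖ ^ 2 = ⟪v, v⟫ := (real_inner_self_eq_norm_sq v).symm
    rw [this, hv, inner_add_left, real_inner_smul_left]
    ring
  have hbdd : BddBelow (Set.range fun i : Fin K => ⟪g i, v⟫) :=
    (Set.finite_range _).bddBelow
  -- inf_i ⟪g i, v⟫ = A
  have hinf : (⨅ i : Fin K, ⟪g i, v⟫) = ‖v‖ ^ 2 - lam * ⟪g0, v⟫ := by
    apply le_antisymm
    · rw [hA]
      calc (⨅ i : Fin K, ⟪g i, v⟫) = (∑ i, w1 i) * (⨅ i : Fin K, ⟪g i, v⟫) := by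
            rw [hw1mem.2, one_mul]
        _ = ∑ i, w1 i * (⨅ j : Fin K, ⟪g j, v⟫) := by rw [Finset.sum_mul]
        _ ≤ ∑ i, w1 i * ⟪g i, v⟫ := by
            apply Finset.sum_le_sum
            intro i _
            exact mul_le_mul_of_nonneg_left (ciInf_le hbdd i) (hw1mem.1 i)
    · exact le_ciInf hlow
  -- the value at v
  have hval : (⨅ i : Fin K, ⟪g i, v⟫) - (1/2) * ‖v‖ ^ 2 + lam * ⟪g0, v⟫
      = (1/2) * ‖v‖ ^ 2 := by
    rw [hinf]; ring
  -- upper bound for general d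
  have hub : ∀ d : Euc m,
      (⨅ i : Fin K, ⟪g i, d⟫) - (1/2) * ‖d‖ ^ 2 + lam * ⟪g0, d⟫
        ≤ (1/2) * ‖v‖ ^ 2 - (1/2) * ‖v - d‖ ^ 2 := by
    intro d
    have h1 : (⨅ i : Fin K, ⟪g i, d⟫) ≤ ∑ i, w1 i * ⟪g i, d⟫ := by
      calc (⨅ i : Fin K, ⟪g i, d⟫) = ∑ i, w1 i * (⨅ j : Fin K, ⟪g j, d⟫) := by
            rw [← Finset.sum_mul, hw1mem.2, one_mul]
        _ ≤ ∑ i, w1 i * ⟪g i, d⟫ := by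
            apply Finset.sum_le_sum
            intro i _
            exact mul_le_mul_of_nonneg_left
              (ciInf_le ((Set.finite_range _).bddBelow) i) (hw1mem.1 i)
    have h2 : (∑ i, w1 i * ⟪g i, d⟫) + lam * ⟪g0, d⟫ = ⟪v, d⟫ := by
      rw [← inner_comb, hv, inner_add_left, real_inner_smul_left]
    have h3 : ‖v - d‖ ^ 2 = ‖v‖ ^ 2 - 2 * ⟪v, d⟫ + ‖d‖ ^ 2 := by
      rw [norm_sub_sq_real]
    linarith
  refine ⟨?_, ?_, ?_, ?_, ?_⟩
  · intro d
    rw [hval]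
    have := hub d
    have hnn : 0 ≤ ‖v - d‖ ^ 2 := by positivity
    linarith
  · intro d hd
    have h1 := hd v
    rw [hval] at h1
    have h2 := hub d
    have : ‖v - d‖ ^ 2 ≤ 0 := by linarith
    have hz : ‖v - d‖ = 0 := by
      have := sq_nonneg ‖v - d‖
      nlinarith [norm_nonneg (v - d)]
    have : v - d = 0 := by rwa [norm_eq_zero] at hz
    have : v = d := by rwa [sub_eq_zero] at this
    exact this.symm
  · exact hval
  · apply le_antisymm
    · refine le_csInf ⟨_, ⟨w1, hw1mem, rfl⟩⟩ ?_
      rintro b ⟨u, hu, rfl⟩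
      exact hw1min u hu
    · exact csInf_le ⟨_, by rintro b ⟨u, hu, rfl⟩; exact hw1min u hu⟩ ⟨w1, hw1mem, rfl⟩
  · intro w2 hw2mem hw2min
    set b : Euc m := comb g w2 + lam • g0 with hb
    have hvb : ‖v‖ ^ 2 = ‖b‖ ^ 2 := by
      have h1 := hw1min w2 hw2mem
      have h2 := hw2min w1 hw1mem
      rw [← hb] at h1
      rw [← hv] at h2
      linarith
    have hmid : (1/2 : ℝ) • (w1 + w2) ∈ simplex K := by
      constructor
      · intro i
        have h1 := hw1mem.1 i
        have h2 := hw2mem.1 i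
        have : ((1/2 : ℝ) • (w1 + w2)) i = (1/2) * (w1 i + w2 i) := by
          simp [PiLp.smul_apply, PiLp.add_apply, smul_eq_mul]
          ring
        rw [this]; linarith
      · have : ∀ i, ((1/2 : ℝ) • (w1 + w2)) i = (1/2) * (w1 i + w2 i) := by
          intro i; simp [PiLp.smul_apply, PiLp.add_apply, smul_eq_mul]; ring
        simp only [this, ← Finset.mul_sum, Finset.sum_add_distrib, hw1mem.2, hw2mem.2]
        norm_num
    have hcmid : comb g ((1/2 : ℝ) • (w1 + w2)) + lam • g0 = (1/2 : ℝ) • (v + b) := by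
      rw [comb_smul, comb_add, hv, hb]
      rw [smul_add]
      module
    have h := hw1min _ hmid
    rw [hcmid] at h
    have hnseq : ‖(1/2 : ℝ) • (v + b)‖ ^ 2 = (1/4) * ‖v + b‖ ^ 2 := by
      rw [norm_smul, Real.norm_eq_abs, mul_pow, abs_of_pos (by norm_num : (0:ℝ) < 1/2)]
      ring
    rw [hnseq] at h
    have hpar1 : ‖v + b‖ ^ 2 = ‖v‖ ^ 2 + 2 * ⟪v, b⟫ + ‖b‖ ^ 2 := norm_add_sq_real v b
    have hpar2 : ‖v - b‖ ^ 2 = ‖v‖ ^ 2 - 2 * ⟪v, b⟫ + ‖b‖ ^ 2 := norm_sub_sq_real v b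
    have hvb0 : ‖v - b‖ ^ 2 ≤ 0 := by linarith
    have hn0 : ‖v - b‖ ^ 2 = 0 := le_antisymm hvb0 (sq_nonneg _)
    have hn : ‖v - b‖ = 0 := by
      exact (pow_eq_zero_iff (by norm_num : (2:ℕ) ≠ 0)).mp hn0
    have hvb' : v = b := sub_eq_zero.mp (norm_eq_zero.mp hn)
    rw [hv, hb] at hvb'
    exact (add_right_cancel hvb'.symm)
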